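/- Let D be a series of length ℓ and r ≥ 0 a warping window. Define L^DTW_i = min over j in [max(1,i-r), min(ℓ,i+r)] of d_j and U^DTW_i = max over the same range. Then for any series D' of length ℓ, LB_Keogh(D, D') = sqrt(Σ_{i=1}^ℓ c_i) ≤ DTW_r(D, D'), where c_i = (d'_i - U^DTW_i)² if d'_i > U^DTW_i, c_i = (d'_i - L^DTW_i)² if d'_i < L^DTW_i, and 0 otherwise, and DTW_r is the DTW distance restricted to warping paths whose index pairs (a,b) satisfy |a-b| ≤ r. -/

import Mathlib

/-- A valid warping path of length `m` between two series of length `ℓ`. -/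
def IsWarpingPath (ℓ m : ℕ) (A : ℕ → ℕ × ℕ) : Prop :=
  1 ≤ m ∧ A 0 = (1, 1) ∧ A (m - 1) = (ℓ, ℓ) ∧
  (∀ k < m, 1 ≤ (A k).1 ∧ (A k).1 ≤ ℓ ∧ 1 ≤ (A k).2 ∧ (A k).2 ≤ ℓ) ∧
  (∀ k, k + 1 < m →
    (A k).1 ≤ (A (k + 1)).1 ∧ (A (k + 1)).1 ≤ (A k).1 + 1 ∧
    (A k).2 ≤ (A (k + 1)).2 ∧ (A (k + 1)).2 ≤ (A k).2 + 1 ∧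
    A (k + 1) ≠ A k)

/-- The path stays in the Sakoe-Chiba band of radius `r`: `|a - b| ≤ r`. -/
def InBand (r m : ℕ) (A : ℕ → ℕ × ℕ) : Prop :=
  ∀ k < m, (A k).1 ≤ (A k).2 + r ∧ (A k).2 ≤ (A k).1 + r

/-- Cost of a warping path. -/
noncomputable def pathCost (D D' : ℕ → ℝ) (m : ℕ) (A : ℕ → ℕ × ℕ) : ℝ :=
  Real.sqrt (∑ k ∈ Finset.range m, (D (A k).1 - D' (A k).2) ^ 2)

/-- Band-constrained DTW distance with warping window `r`. -/
noncomputable def dtwBand (D D' : ℕ → ℝ) (ℓ r : ℕ) : ℝ :=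
  sInf { c | ∃ m A, IsWarpingPath ℓ m A ∧ InBand r m A ∧ c = pathCost D D' m A }

/-- `L^DTW_i`: minimum of `D` over positions `j ∈ [max 1 (i-r), min ℓ (i+r)]`. -/
noncomputable def dtwEnvLo (D : ℕ → ℝ) (ℓ r i : ℕ) : ℝ :=
  sInf (D '' {j | max 1 (i - r) ≤ j ∧ j ≤ min ℓ (i + r)})

/-- `U^DTW_i`: maximum of `D` over positions `j ∈ [max 1 (i-r), min ℓ (i+r)]`. -/
noncomputable def dtwEnvHi (D : ℕ → ℝ) (ℓ r i : ℕ) : ℝ :=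
  sSup (D '' {j | max 1 (i - r) ≤ j ∧ j ≤ min ℓ (i + r)})

/-- Per-coordinate LB_Keogh cost. -/
noncomputable def keoghCost (D D' : ℕ → ℝ) (ℓ r i : ℕ) : ℝ :=
  if D' i > dtwEnvHi D ℓ r i then (D' i - dtwEnvHi D ℓ r i) ^ 2
  else if D' i < dtwEnvLo D ℓ r i then (D' i - dtwEnvLo D ℓ r i) ^ 2
  else 0

lemma hits (m ℓ : ℕ) (g : ℕ → ℕ) (h0 : g 0 = 1) (hm : 1 ≤ m) (hl : g (m - 1) = ℓ)
    (hstep : ∀ k, k + 1 < m → g (k + 1) ≤ g k + 1) (i : ℕ) (h1 : 1 ≤ i) (h2 : i ≤ ℓ) :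
    ∃ k, k < m ∧ g k = i := by
  classical
  have hP : ∃ k, k < m ∧ i ≤ g k := ⟨m - 1, by omega, by omega⟩
  cases h : Nat.find hP with
  | zero =>
    have hs := Nat.find_spec hP
    rw [h] at hs
    exact ⟨0, by omega, by omega⟩
  | succ k =>
    have hs := Nat.find_spec hP
    rw [h] at hs
    have hnot : ¬ (k < m ∧ i ≤ g k) := Nat.find_min hP (by omega)
    have hst := hstep k (by omega)
    exact ⟨k + 1, by omega, by omega⟩

lemma env_bounds (D : ℕ → ℝ) (ℓ r i j : ℕ) (h1 : 1 ≤ j) (h2 : j ≤ ℓ)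
    (h3 : j ≤ i + r) (h4 : i ≤ j + r) :
    dtwEnvLo D ℓ r i ≤ D j ∧ D j ≤ dtwEnvHi D ℓ r i := by
  have hmem : j ∈ {j | max 1 (i - r) ≤ j ∧ j ≤ min ℓ (i + r)} := by
    constructor
    · exact max_le h1 (by omega)
    · exact le_min h2 h3
  have hfin : ({j | max 1 (i - r) ≤ j ∧ j ≤ min ℓ (i + r)} : Set ℕ).Finite := by
    have he : {j | max 1 (i - r) ≤ j ∧ j ≤ min ℓ (i + r)}
        = Set.Icc (max 1 (i - r)) (min ℓ (i + r)) := rfl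
    rw [he]; exact Set.finite_Icc _ _
  constructor
  · exact csInf_le (hfin.image D).bddBelow ⟨j, hmem, rfl⟩
  · exact le_csSup (hfin.image D).bddAbove ⟨j, hmem, rfl⟩

lemma keogh_le (D D' : ℕ → ℝ) (ℓ r i j : ℕ) (h1 : 1 ≤ j) (h2 : j ≤ ℓ)
    (h3 : j ≤ i + r) (h4 : i ≤ j + r) :
    keoghCost D D' ℓ r i ≤ (D j - D' i) ^ 2 := by
  obtain ⟨hlo, hhi⟩ := env_bounds D ℓ r i j h1 h2 h3 h4
  unfold keoghCost
  split_ifs with ha hb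
  · nlinarith
  · nlinarith
  · positivity

lemma diag_path (ℓ : ℕ) (hℓ : 1 ≤ ℓ) :
    IsWarpingPath ℓ ℓ (fun k => (k + 1, k + 1)) := by
  refine ⟨hℓ, rfl, ?_, ?_, ?_⟩
  · simp [Nat.sub_add_cancel hℓ]
  · intro k hk; simp; omega
  · intro k hk
    refine ⟨by simp, by simp, by simp, by simp, ?_⟩
    simp [Prod.ext_iff]

/-- the LB_Keogh lower bound: for series `D`, `D'` of length `ℓ` and
warping window `r`, `sqrt (Σ_{i=1}^ℓ c_i) ≤ DTW_r(D, D')`. -/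
theorem lb_keogh_le_dtw (D D' : ℕ → ℝ) (ℓ r : ℕ) (hℓ : 1 ≤ ℓ) :
    Real.sqrt (∑ i ∈ Finset.Icc 1 ℓ, keoghCost D D' ℓ r i) ≤ dtwBand D D' ℓ r := by
  classical
  apply le_csInf
  · exact ⟨pathCost D D' ℓ (fun k => (k + 1, k + 1)), ℓ, _, diag_path ℓ hℓ,
      fun k hk => ⟨by simp, by simp⟩, rfl⟩
  · rintro c ⟨m, A, ⟨hm, h0, hl, hbd, hstep⟩, hband, rfl⟩
    apply Real.sqrt_le_sqrt
    have hex : ∀ i, ∃ k, 1 ≤ i → i ≤ ℓ → k < m ∧ (A k).2 = i := by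
      intro i
      by_cases h : 1 ≤ i ∧ i ≤ ℓ
      · obtain ⟨k, hk1, hk2⟩ := hits m ℓ (fun k => (A k).2) (by simp [h0]) hm (by simp [hl])
          (fun k hk => (hstep k hk).2.2.2.1) i h.1 h.2
        exact ⟨k, fun _ _ => ⟨hk1, hk2⟩⟩
      · exact ⟨0, fun ha hb => absurd ⟨ha, hb⟩ h⟩
    choose k hk using hex
    calc ∑ i ∈ Finset.Icc 1 ℓ, keoghCost D D' ℓ r i
        ≤ ∑ i ∈ Finset.Icc 1 ℓ, (D (A (k i)).1 - D' (A (k i)).2) ^ 2 := by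
          apply Finset.sum_le_sum
          intro i hi
          rw [Finset.mem_Icc] at hi
          obtain ⟨hkm, hki⟩ := hk i hi.1 hi.2
          obtain ⟨hb1, hb2, _, _⟩ := hbd (k i) hkm
          obtain ⟨hc1, hc2⟩ := hband (k i) hkm
          rw [hki] at hc1 hc2 ⊢
          exact keogh_le D D' ℓ r i (A (k i)).1 hb1 hb2 (by omega) (by omega)
      _ = ∑ kk ∈ (Finset.Icc 1 ℓ).image k, (D (A kk).1 - D' (A kk).2) ^ 2 := by
          rw [Finset.sum_image]
          intro i hi i' hi' hkk
          rw [Finset.mem_coe, Finset.mem_Icc] at hi hi'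
          have e1 := (hk i hi.1 hi.2).2
          have e2 := (hk i' hi'.1 hi'.2).2
          rw [← e1, ← e2, hkk]
      _ ≤ ∑ kk ∈ Finset.range m, (D (A kk).1 - D' (A kk).2) ^ 2 := by
          apply Finset.sum_le_sum_of_subset_of_nonneg
          · intro kk hkk
            rw [Finset.mem_image] at hkk
            obtain ⟨i, hi, rfl⟩ := hkk
            rw [Finset.mem_Icc] at hi
            exact Finset.mem_range.mpr (hk i hi.1 hi.2).1
          · intro kk _ _; positivity
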